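/- Let d ≥ 1. For all κ > 0, S > 0, ν > 0, every φ ∈ Υ_{κ,S} and every integer m ≥ d/κ, sup_{t ∈ [−ν,ν]^d} |φ(t) − T_m φ(t)| ≤ 2^d · (Sν)^m · m^{−κm+d} · f_κ(Sν). -/

import Mathlib

/- STATEMENT 18: truncation error for φ ∈ Υ_{κ,S}: for every integer m ≥ d/κ and
   t ∈ [−ν,ν]^d, |φ(t) − T_m φ(t)| ≤ 2^d (Sν)^m m^{−κm+d} f_κ(Sν). -/

namespace Stmt18

abbrev Idx (d : ℕ) := Fin d → ℕ

def degSum {d : ℕ} (i : Idx d) : ℕ := ∑ a, i a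

noncomputable def monom {d : ℕ} (i : Idx d) (z : Fin d → ℂ) : ℂ := ∏ a, z a ^ i a

/-- φ is given everywhere on ℂ^d by the absolutely convergent power series with
coefficients c. -/
def HasCoeffs {d : ℕ} (c : Idx d → ℂ) (φ : (Fin d → ℂ) → ℂ) : Prop :=
  ∀ z : Fin d → ℂ,
    Summable (fun i : Idx d => ‖c i * monom i z‖) ∧
    HasSum (fun i : Idx d => c i * monom i z) (φ z)

/-- The coefficient conditions defining the class Υ_{κ,S}. -/
def CoeffBound {d : ℕ} (κ S : ℝ) (c : Idx d → ℂ) : Prop :=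
  c 0 = 1 ∧
  (∀ i : Idx d, (starRingEnd ℂ) (c i) = (-1 : ℂ) ^ degSum i * c i) ∧
  ∀ i : Idx d, i ≠ 0 →
    ‖c i‖ ≤ S ^ degSum i * (degSum i : ℝ) ^ (-(κ * (degSum i : ℝ)))

/-- The truncation T_m φ: keep only the coefficients of total degree at most m. -/
noncomputable def trunc {d : ℕ} (m : ℕ) (c : Idx d → ℂ) (z : Fin d → ℂ) : ℂ :=
  ∑' i : Idx d, if degSum i ≤ m then c i * monom i z else 0

/-- f_κ(u) = Σ_{m ≥ 1} (m + d/κ)^{−κm} u^m. -/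
noncomputable def fkappa (d : ℕ) (κ u : ℝ) : ℝ :=
  ∑' m : ℕ, (((m : ℝ) + 1) + (d : ℝ) / κ) ^ (-(κ * ((m : ℝ) + 1))) * u ^ (m + 1)

/-! ### Auxiliary lemmas -/

lemma degSum_apply_le {d : ℕ} (i : Idx d) (a : Fin d) : i a ≤ degSum i :=
  Finset.single_le_sum (fun _ _ => Nat.zero_le _) (Finset.mem_univ a)

lemma fiber_inj {d n : ℕ} :
    Function.Injective (fun i : (degSum ⁻¹' {n} : Set (Idx d)) =>
      (fun a => (⟨i.1 a, by
        have h1 : i.1 a ≤ degSum i.1 := degSum_apply_le i.1 a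
        have h2 : degSum i.1 = n := i.2
        omega⟩ : Fin (n + 1)) : Fin d → Fin (n + 1))) := by
  intro i i' hii
  ext a
  have := congrFun hii a
  simpa [Fin.ext_iff] using this

lemma fiber_finite (d n : ℕ) : Finite (degSum ⁻¹' {n} : Set (Idx d)) :=
  Finite.of_injective _ fiber_inj

lemma fiber_card (d n : ℕ) : Nat.card (degSum ⁻¹' {n} : Set (Idx d)) ≤ (n + 1) ^ d := by
  have := Nat.card_le_card_of_injective _ (fiber_inj (d := d) (n := n))
  simpa using this

lemma G_summable (q u κ : ℝ) (hq : 0 ≤ q) (hκ : 0 < κ) (hu : 0 < u) :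
    Summable (fun j : ℕ => (((j : ℝ) + 1) + q) ^ (-(κ * ((j : ℝ) + 1))) * u ^ (j + 1)) := by
  set G : ℕ → ℝ := fun j => (((j : ℝ) + 1) + q) ^ (-(κ * ((j : ℝ) + 1))) * u ^ (j + 1) with hG
  have hGnonneg : ∀ j, 0 ≤ G j := by
    intro j
    have h1 : (0:ℝ) < ((j : ℝ) + 1) + q := by positivity
    positivity
  set N : ℕ := ⌈(2 * u) ^ (1 / κ)⌉₊ with hN
  have key : ∀ j : ℕ, N ≤ j → G j ≤ (1/2 : ℝ) ^ j := by
    intro j hj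
    set x : ℝ := ((j : ℝ) + 1) + q with hx
    have hx0 : (0:ℝ) < x := by positivity
    have hxN : (2 * u) ^ (1 / κ) ≤ x := by
      calc (2 * u) ^ (1 / κ) ≤ (N : ℝ) := Nat.le_ceil _
        _ ≤ (j : ℝ) := by exact_mod_cast hj
        _ ≤ x := by rw [hx]; linarith
    have hxκ : 2 * u ≤ x ^ κ := by
      have := Real.rpow_le_rpow (by positivity) hxN (le_of_lt hκ)
      rwa [← Real.rpow_mul (by positivity : (0:ℝ) ≤ 2 * u), one_div,
        inv_mul_cancel₀ (ne_of_gt hκ), Real.rpow_one] at this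
    have hstep : x ^ (-κ) * u ≤ 1 / 2 := by
      rw [Real.rpow_neg hx0.le]
      rw [inv_mul_le_iff₀ (by positivity)]
      linarith
    have hGe : G j = (x ^ (-κ) * u) ^ (j + 1) := by
      rw [hG]
      simp only [mul_pow]
      congr 1
      rw [← Real.rpow_natCast (x ^ (-κ)) (j+1), ← Real.rpow_mul hx0.le]
      congr 1
      push_cast
      ring
    have h0 : 0 ≤ x ^ (-κ) * u := by positivity
    calc G j = (x ^ (-κ) * u) ^ (j + 1) := hGe
      _ ≤ (1/2 : ℝ) ^ (j + 1) := pow_le_pow_left₀ h0 hstep (j+1)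
      _ ≤ (1/2 : ℝ) ^ j := by
          apply pow_le_pow_of_le_one (by norm_num) (by norm_num)
          omega
  rw [← summable_nat_add_iff N]
  apply Summable.of_nonneg_of_le (fun j => hGnonneg _) (fun j => key (j + N) (by omega))
  exact summable_geometric_of_lt_one (by norm_num) (by norm_num) |>.comp_injective
    (add_left_injective N)

lemma key_ineq (d m j : ℕ) (κ u : ℝ) (hκ : 0 < κ) (hu : 0 < u) (hd : 1 ≤ d)
    (hm1 : 1 ≤ m) (hm : (d : ℝ) / κ ≤ (m : ℝ)) :
    ((m + 1 + j : ℕ) + 1 : ℝ) ^ d * (u ^ (m + 1 + j) *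
        ((m + 1 + j : ℕ) : ℝ) ^ (-(κ * ((m + 1 + j : ℕ) : ℝ)))) ≤
      (2 : ℝ) ^ d * u ^ m * (m : ℝ) ^ (-(κ * (m : ℝ)) + (d : ℝ)) *
        ((((j : ℝ) + 1) + (d : ℝ) / κ) ^ (-(κ * ((j : ℝ) + 1))) * u ^ (j + 1)) := by
  set n : ℕ := m + 1 + j with hn
  have hM0 : (0:ℝ) < (m : ℝ) := by exact_mod_cast hm1
  have hN1 : (1:ℝ) ≤ (n : ℝ) := by exact_mod_cast Nat.one_le_iff_ne_zero.mpr (by omega)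
  have hN0 : (0:ℝ) < (n : ℝ) := by linarith
  have hNcast : (n : ℝ) = (m : ℝ) + 1 + (j : ℝ) := by push_cast [hn]; ring
  have h1 : ((n : ℝ) + 1) ^ d ≤ 2 ^ d * (n : ℝ) ^ d := by
    rw [← mul_pow]
    exact pow_le_pow_left₀ (by positivity) (by linarith) d
  have h2 : ((n : ℝ)) ^ d * (n : ℝ) ^ (-(κ * (n : ℝ))) =
      (n : ℝ) ^ (-(κ * (m : ℝ)) + (d : ℝ)) * (n : ℝ) ^ (-(κ * ((j : ℝ) + 1))) := by
    rw [← Real.rpow_natCast ((n:ℝ)) d, ← Real.rpow_add hN0, ← Real.rpow_add hN0]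
    congr 1
    rw [hNcast]; ring
  have h3 : (n : ℝ) ^ (-(κ * (m : ℝ)) + (d : ℝ)) ≤ (m : ℝ) ^ (-(κ * (m : ℝ)) + (d : ℝ)) := by
    apply Real.rpow_le_rpow_of_nonpos hM0 (by rw [hNcast]; linarith [Nat.cast_nonneg (α := ℝ) j])
    have : (d : ℝ) ≤ κ * (m : ℝ) := by
      rw [div_le_iff₀ hκ] at hm; linarith
    linarith
  have h4 : (n : ℝ) ^ (-(κ * ((j : ℝ) + 1))) ≤
      (((j : ℝ) + 1) + (d : ℝ) / κ) ^ (-(κ * ((j : ℝ) + 1))) := by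
    apply Real.rpow_le_rpow_of_nonpos (by positivity)
    · rw [hNcast]; linarith
    · have : (0:ℝ) ≤ κ * ((j:ℝ)+1) := by positivity
      linarith
  have h5 : u ^ n = u ^ m * u ^ (j + 1) := by rw [hn, ← pow_add]; ring_nf
  have hb1 : (0:ℝ) ≤ (n : ℝ) ^ (-(κ * ((j : ℝ) + 1))) := by positivity
  calc ((n : ℕ) + 1 : ℝ) ^ d * (u ^ n * (n : ℝ) ^ (-(κ * (n : ℝ))))
      ≤ (2 ^ d * (n : ℝ) ^ d) * (u ^ n * (n : ℝ) ^ (-(κ * (n : ℝ)))) := by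
        apply mul_le_mul_of_nonneg_right _ (by positivity)
        exact_mod_cast h1
    _ = 2 ^ d * u ^ m * ((n : ℝ) ^ (-(κ * (m : ℝ)) + (d : ℝ)) *
          (n : ℝ) ^ (-(κ * ((j : ℝ) + 1)))) * u ^ (j + 1) := by
        rw [h5, ← h2]; ring
    _ ≤ 2 ^ d * u ^ m * ((m : ℝ) ^ (-(κ * (m : ℝ)) + (d : ℝ)) *
          (((j : ℝ) + 1) + (d : ℝ) / κ) ^ (-(κ * ((j : ℝ) + 1)))) * u ^ (j + 1) := by
        apply mul_le_mul_of_nonneg_right _ (by positivity)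
        apply mul_le_mul_of_nonneg_left _ (by positivity)
        exact mul_le_mul h3 h4 hb1 (by positivity)
    _ = (2 : ℝ) ^ d * u ^ m * (m : ℝ) ^ (-(κ * (m : ℝ)) + (d : ℝ)) *
        ((((j : ℝ) + 1) + (d : ℝ) / κ) ^ (-(κ * ((j : ℝ) + 1))) * u ^ (j + 1)) := by ring

theorem stmt18 (d : ℕ) (hd : 1 ≤ d) (κ S ν : ℝ) (hκ : 0 < κ) (hS : 0 < S) (hν : 0 < ν)
    (φ : (Fin d → ℂ) → ℂ) (c : Idx d → ℂ)
    (hc : HasCoeffs c φ) (hb : CoeffBound κ S c)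
    (m : ℕ) (hm : (d : ℝ) / κ ≤ (m : ℝ))
    (t : Fin d → ℝ) (ht : ∀ a, |t a| ≤ ν) :
    ‖φ (fun a => (t a : ℂ)) - trunc m c (fun a => (t a : ℂ))‖ ≤
      (2 : ℝ) ^ d * (S * ν) ^ m * (m : ℝ) ^ (-(κ * (m : ℝ)) + (d : ℝ)) *
        fkappa d κ (S * ν) := by
  set u : ℝ := S * ν with hu_def
  have hu : 0 < u := mul_pos hS hν
  have hm1 : 1 ≤ m := by
    by_contra hcon
    have hm0 : m = 0 := by omega
    have : (0:ℝ) < (d : ℝ) / κ := by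
      have : (0:ℝ) < (d : ℝ) := by exact_mod_cast hd
      positivity
    rw [hm0] at hm
    simp at hm
    linarith
  set z : Fin d → ℂ := fun a => ((t a : ℝ) : ℂ) with hz
  obtain ⟨habs, hφ⟩ := hc z
  set f : Idx d → ℂ := fun i => c i * monom i z with hf
  have habs' : Summable fun i => ‖f i‖ := by
    simpa [hf] using habs
  have hSf : Summable f := habs'.of_norm
  have hStr : Summable (fun i => if degSum i ≤ m then f i else 0) := by
    apply Summable.of_norm_bounded habs'
    intro i
    split_ifs <;> simp
  set h : Idx d → ℂ := fun i => if m < degSum i then f i else 0 with hh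
  have hSh : Summable fun i => ‖h i‖ := by
    apply Summable.of_nonneg_of_le (fun i => norm_nonneg _) _ habs'
    intro i
    simp only [hh]
    split_ifs <;> simp
  -- the difference is the tail series
  have hdiff : φ z - trunc m c z = ∑' i, h i := by
    have e1 : φ z = ∑' i, f i := hφ.tsum_eq.symm
    have e2 : trunc m c z = ∑' i, (if degSum i ≤ m then f i else 0) := rfl
    rw [e1, e2, ← Summable.tsum_sub hSf hStr]
    apply tsum_congr
    intro i
    simp only [hh]
    split_ifs with h1 h2 <;> first | omega | simp
  -- per-term bound on the tail
  have hterm : ∀ i : Idx d, m < degSum i →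
      ‖h i‖ ≤ u ^ (degSum i) * ((degSum i : ℝ)) ^ (-(κ * ((degSum i : ℝ)))) := by
    intro i hi
    have hi0 : i ≠ 0 := by
      intro hcon
      rw [hcon] at hi
      simp [degSum] at hi
    have hcb := hb.2.2 i hi0
    have hmon : ‖monom i z‖ ≤ ν ^ (degSum i) := by
      rw [monom, norm_prod]
      have : ∀ a : Fin d, ‖z a ^ i a‖ = |t a| ^ (i a) := by
        intro a
        rw [norm_pow, hz]
        simp
      rw [Finset.prod_congr rfl (fun a _ => this a)]
      calc ∏ a, |t a| ^ (i a) ≤ ∏ a, ν ^ (i a) := by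
            apply Finset.prod_le_prod (fun a _ => by positivity)
            intro a _
            exact pow_le_pow_left₀ (abs_nonneg _) (ht a) _
        _ = ν ^ (degSum i) := by
            rw [degSum, ← Finset.prod_pow_eq_pow_sum]
    have hnn : (0:ℝ) ≤ (degSum i : ℝ) ^ (-(κ * ((degSum i : ℝ)))) := by positivity
    have : ‖h i‖ = ‖c i‖ * ‖monom i z‖ := by
      simp only [hh, hf]
      rw [if_pos hi, norm_mul]
    rw [this]
    calc ‖c i‖ * ‖monom i z‖
        ≤ (S ^ degSum i * (degSum i : ℝ) ^ (-(κ * (degSum i : ℝ)))) * ν ^ (degSum i) := by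
          apply mul_le_mul hcb hmon (norm_nonneg _)
          positivity
      _ = u ^ (degSum i) * ((degSum i : ℝ)) ^ (-(κ * ((degSum i : ℝ)))) := by
          rw [hu_def, mul_pow]; ring
  -- group by total degree
  have hFib := hSh.hasSum.tsum_fiberwise degSum
  set F : ℕ → ℝ := fun n => ∑' i : (degSum ⁻¹' {n} : Set (Idx d)), ‖h i.1‖ with hF
  set Mb : ℕ → ℝ := fun n =>
    if m < n then ((n : ℝ) + 1) ^ d * (u ^ n * (n : ℝ) ^ (-(κ * (n : ℝ)))) else 0 with hMb
  have hMbnn : ∀ n, 0 ≤ Mb n := by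
    intro n
    simp only [hMb]
    split_ifs with hn
    · positivity
    · exact le_rfl
  have hFM : ∀ n, F n ≤ Mb n := by
    intro n
    haveI : Finite (degSum ⁻¹' {n} : Set (Idx d)) := fiber_finite d n
    haveI := Fintype.ofFinite (degSum ⁻¹' {n} : Set (Idx d))
    by_cases hn : m < n
    · have hn0 : (0:ℝ) < (n : ℝ) := by
        have : 1 ≤ n := by omega
        exact_mod_cast this
      have hbound : ∀ i : (degSum ⁻¹' {n} : Set (Idx d)),
          ‖h i.1‖ ≤ u ^ n * (n : ℝ) ^ (-(κ * (n : ℝ))) := by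
        intro i
        have hi : degSum i.1 = n := i.2
        have := hterm i.1 (by rw [hi]; exact hn)
        rwa [hi] at this
      have hcard := fiber_card d n
      calc F n = ∑ i : (degSum ⁻¹' {n} : Set (Idx d)), ‖h i.1‖ := tsum_fintype _
        _ ≤ Finset.univ.card • (u ^ n * (n : ℝ) ^ (-(κ * (n : ℝ)))) :=
            Finset.sum_le_card_nsmul _ _ _ (fun i _ => hbound i)
        _ = (Nat.card (degSum ⁻¹' {n} : Set (Idx d)) : ℝ) *
              (u ^ n * (n : ℝ) ^ (-(κ * (n : ℝ)))) := by
            rw [nsmul_eq_mul, Finset.card_univ, Nat.card_eq_fintype_card]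
        _ ≤ (((n + 1) ^ d : ℕ) : ℝ) * (u ^ n * (n : ℝ) ^ (-(κ * (n : ℝ)))) := by
            apply mul_le_mul_of_nonneg_right _ (by positivity)
            exact_mod_cast hcard
        _ = Mb n := by
            simp only [hMb]
            rw [if_pos hn]
            push_cast
            ring
    · have hz0 : ∀ i : (degSum ⁻¹' {n} : Set (Idx d)), ‖h i.1‖ = 0 := by
        intro i
        have hi : degSum i.1 = n := i.2
        have hcond : ¬ m < degSum i.1 := by rw [hi]; exact hn
        simp only [hh]
        rw [if_neg hcond, norm_zero]
      have hF0 : F n = 0 := by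
        show (∑' i : (degSum ⁻¹' {n} : Set (Idx d)), ‖h i.1‖) = 0
        rw [tsum_congr hz0]
        exact tsum_zero
      rw [hF0]
      exact hMbnn n
  -- comparison with the fkappa series
  have hGsum := G_summable ((d : ℝ) / κ) u κ (by positivity) hκ hu
  have hTsum : Summable (fun j : ℕ =>
      ((2 : ℝ) ^ d * u ^ m * (m : ℝ) ^ (-(κ * (m : ℝ)) + (d : ℝ))) *
        ((((j : ℝ) + 1) + (d : ℝ) / κ) ^ (-(κ * ((j : ℝ) + 1))) * u ^ (j + 1))) :=
    hGsum.mul_left _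
  have hMT : ∀ j, Mb (j + (m + 1)) ≤
      ((2 : ℝ) ^ d * u ^ m * (m : ℝ) ^ (-(κ * (m : ℝ)) + (d : ℝ))) *
        ((((j : ℝ) + 1) + (d : ℝ) / κ) ^ (-(κ * ((j : ℝ) + 1))) * u ^ (j + 1)) := by
    intro j
    have hkey := key_ineq d m j κ u hκ hu hd hm1 hm
    have hidx : j + (m + 1) = m + 1 + j := by omega
    rw [hidx]
    simp only [hMb]
    rw [if_pos (show m < m + 1 + j by omega)]
    calc ((m + 1 + j : ℕ) + 1 : ℝ) ^ d * (u ^ (m + 1 + j) *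
          ((m + 1 + j : ℕ) : ℝ) ^ (-(κ * ((m + 1 + j : ℕ) : ℝ)))) ≤ _ := hkey
      _ = _ := by ring
  have hMbshift : Summable (fun j => Mb (j + (m + 1))) :=
    Summable.of_nonneg_of_le (fun j => hMbnn _) hMT hTsum
  have hMbsum : Summable Mb := (summable_nat_add_iff (m + 1)).mp hMbshift
  have htsumMb : ∑' n, Mb n ≤
      ((2 : ℝ) ^ d * u ^ m * (m : ℝ) ^ (-(κ * (m : ℝ)) + (d : ℝ))) * fkappa d κ u := by
    have h0 : ∑ i ∈ Finset.range (m + 1), Mb i = 0 := by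
      apply Finset.sum_eq_zero
      intro i hi
      simp only [Finset.mem_range] at hi
      simp only [hMb]
      rw [if_neg (show ¬ m < i by omega)]
    rw [← Summable.sum_add_tsum_nat_add (m + 1) hMbsum, h0, zero_add]
    calc ∑' j, Mb (j + (m + 1)) ≤ _ := Summable.tsum_le_tsum hMT hMbshift hTsum
      _ = ((2 : ℝ) ^ d * u ^ m * (m : ℝ) ^ (-(κ * (m : ℝ)) + (d : ℝ))) * fkappa d κ u := by
        rw [fkappa, ← tsum_mul_left]
  -- final chain
  have hA : ‖φ z - trunc m c z‖ ≤ ∑' i, ‖h i‖ := by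
    rw [hdiff]
    exact norm_tsum_le_tsum_norm hSh
  have hA2 : (∑' n, F n) = ∑' i, ‖h i‖ := hFib.tsum_eq
  have hA3 : (∑' n, F n) ≤ ∑' n, Mb n := Summable.tsum_le_tsum hFM hFib.summable hMbsum
  calc ‖φ z - trunc m c z‖ ≤ ∑' i, ‖h i‖ := hA
    _ = ∑' n, F n := hA2.symm
    _ ≤ ∑' n, Mb n := hA3
    _ ≤ (2 : ℝ) ^ d * u ^ m * (m : ℝ) ^ (-(κ * (m : ℝ)) + (d : ℝ)) * fkappa d κ u := htsumMb

end Stmt18
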